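/- arXiv:1902.06480 — 2 statements merged into one kernel-verified Lean document; each statement's English description precedes it below -/
import Mathlib

section
/- Suppose K̂ : ℝ → ℂ is continuous, satisfies K̂(ω) → 0 as |ω| → ∞, and is bounded. Then for each fixed real Ω, Σ_{m∈ℤ} (1/Δt) K̂(Ω - 2mπ/Δt) φ̂_Δt(Ω - 2mπ/Δt) → K̂(Ω) as Δt → 0⁺. -/
open Filter

/-- The Fourier transform of the hat function (real argument), with `φ̂_Δt(0) = Δt`. -/
noncomputable def phiHatR (Δt Ω : ℝ) : ℝ :=
  if Ω = 0 then Δt else 2 / (Ω ^ 2 * Δt) * (1 - Real.cos (Ω * Δt))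

lemma phiHatR_nonneg {Δt : ℝ} (h : 0 < Δt) (ω : ℝ) : 0 ≤ phiHatR Δt ω := by
  unfold phiHatR
  split_ifs with hω
  · exact h.le
  · have h1 : Real.cos (ω * Δt) ≤ 1 := Real.cos_le_one _
    have h2 : 0 < ω ^ 2 := by positivity
    have h3 : 0 ≤ 2 / (ω ^ 2 * Δt) := by positivity
    nlinarith

lemma phiHatR_le_four {Δt : ℝ} (h : 0 < Δt) {ω : ℝ} (hω : ω ≠ 0) :
    phiHatR Δt ω ≤ 4 / (ω ^ 2 * Δt) := by
  unfold phiHatR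
  rw [if_neg hω]
  have h1 : -1 ≤ Real.cos (ω * Δt) := Real.neg_one_le_cos _
  have h2 : 0 < ω ^ 2 * Δt := by positivity
  rw [div_mul_eq_mul_div, div_le_div_iff₀ h2 h2]
  nlinarith

/-- `(1/Δt) * φ̂_Δt(Ω) → 1` as `Δt → 0⁺`. -/
lemma one_div_mul_phiHatR_tendsto (Ω : ℝ) :
    Tendsto (fun Δt => 1 / Δt * phiHatR Δt Ω) (nhdsWithin 0 (Set.Ioi 0)) (nhds 1) := by
  by_cases hΩ : Ω = 0
  · apply Tendsto.congr' _ tendsto_const_nhds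
    filter_upwards [self_mem_nhdsWithin] with Δt (hΔt : (0:ℝ) < Δt)
    simp [phiHatR, hΩ, one_div, inv_mul_cancel₀ hΔt.ne']
  · have hF : Tendsto (fun Δt => 1 / Δt * phiHatR Δt Ω - 1)
        (nhdsWithin 0 (Set.Ioi 0)) (nhds 0) := by
      apply squeeze_zero_norm' (a := fun Δt => 5 * Ω ^ 2 * Δt ^ 2 / 48)
      · have hsmall : ∀ᶠ Δt : ℝ in nhdsWithin 0 (Set.Ioi 0), |Δt| < 1 / |Ω| := by
          apply eventually_nhdsWithin_of_eventually_nhds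
          have : Tendsto (fun Δt : ℝ => |Δt|) (nhds 0) (nhds 0) := by
            simpa using (continuous_abs.tendsto (0:ℝ))
          exact this.eventually_lt_const (by positivity)
        filter_upwards [self_mem_nhdsWithin, hsmall] with Δt hΔt habs
        have hΔt : (0:ℝ) < Δt := hΔt
        set x := Ω * Δt with hx
        have hx1 : |x| ≤ 1 := by
          rw [hx, abs_mul]
          calc |Ω| * |Δt| ≤ |Ω| * (1 / |Ω|) := by
                exact mul_le_mul_of_nonneg_left habs.le (abs_nonneg _)
            _ = 1 := by field_simp
        have hd := Real.cos_bound hx1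
        have hxne : x ≠ 0 := mul_ne_zero hΩ hΔt.ne'
        have hx2 : 0 < x ^ 2 := by positivity
        have heq : 1 / Δt * phiHatR Δt Ω - 1
            = -2 * (Real.cos x - (1 - x ^ 2 / 2)) / x ^ 2 := by
          unfold phiHatR
          rw [if_neg hΩ, hx]
          field_simp
          ring
        rw [heq, Real.norm_eq_abs, abs_div, abs_mul]
        rw [div_le_iff₀ (by positivity : (0:ℝ) < |x ^ 2|)]
        have hax : |x ^ 2| = x ^ 2 := abs_of_nonneg (sq_nonneg _)
        have hx4 : |x| ^ 4 = (x ^ 2) ^ 2 := by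
          rw [← abs_pow]
          rw [abs_of_nonneg (by positivity : (0:ℝ) ≤ x ^ 4)]
          ring
        have hxval : x ^ 2 = Ω ^ 2 * Δt ^ 2 := by rw [hx]; ring
        rw [hax]
        have h2 : |(-2 : ℝ)| = 2 := by norm_num
        rw [h2]
        nlinarith [abs_nonneg (Real.cos x - (1 - x ^ 2 / 2)), sq_nonneg x]
      · have hcont2 : Continuous (fun Δt : ℝ => 5 * Ω ^ 2 * Δt ^ 2 / 48) := by
          continuity
        have : Tendsto (fun Δt : ℝ => 5 * Ω ^ 2 * Δt ^ 2 / 48) (nhds 0) (nhds 0) := by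
          have := hcont2.tendsto 0
          simpa using this
        exact this.mono_left nhdsWithin_le_nhds
    have := hF.add (tendsto_const_nhds (x := (1:ℝ)))
    simpa using this

/-- If `K̂ : ℝ → ℂ` is continuous, bounded, and tends to `0` at infinity, then for each fixed
real `Ω`, `Σ_{m∈ℤ} (1/Δt) K̂(Ω - 2mπ/Δt) φ̂_Δt(Ω - 2mπ/Δt) → K̂(Ω)` as `Δt → 0⁺`. -/
theorem discretised_fourier_tendsto_kernel (K : ℝ → ℂ) (hcont : Continuous K)
    (hdecay : Tendsto K (cocompact ℝ) (nhds 0)) (hbdd : ∃ B : ℝ, ∀ ω : ℝ, ‖K ω‖ ≤ B)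
    (Ω : ℝ) :
    Tendsto (fun Δt : ℝ =>
        ∑' m : ℤ, (1 / Δt : ℝ) • (K (Ω - 2 * m * Real.pi / Δt)
          * (phiHatR Δt (Ω - 2 * m * Real.pi / Δt) : ℂ)))
      (nhdsWithin 0 (Set.Ioi 0)) (nhds (K Ω)) := by
  have hπ := Real.pi_pos
  rw [Metric.tendsto_nhdsWithin_nhds]
  intro ε hε
  -- the constant c = ∑' m, 4 / (π² m²)
  have hcsum : Summable (fun m : ℤ => 4 / (Real.pi ^ 2 * (m:ℝ) ^ 2)) := by
    have h2 : Summable (fun m : ℤ => 1 / (m:ℝ) ^ 2) :=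
      Real.summable_one_div_int_pow.2 one_lt_two
    have := h2.mul_left (4 / Real.pi ^ 2)
    apply this.congr
    intro m
    field_simp
  set c := ∑' m : ℤ, 4 / (Real.pi ^ 2 * (m:ℝ) ^ 2) with hc
  have hcnn : 0 ≤ c := tsum_nonneg (fun m => by positivity)
  set ε' := ε / (2 * (c + 1)) with hε'
  have hε'pos : 0 < ε' := by positivity
  -- decay: find R with ‖K ω‖ < ε' for |ω| ≥ R
  obtain ⟨R, hR1, hRsmall⟩ : ∃ R : ℝ, 1 ≤ R ∧ ∀ ω : ℝ, R ≤ |ω| → ‖K ω‖ < ε' := by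
    rw [cocompact_eq_atBot_atTop, tendsto_sup] at hdecay
    have htop := (NormedAddCommGroup.tendsto_nhds_zero.1 hdecay.2) ε' hε'pos
    have hbot := (NormedAddCommGroup.tendsto_nhds_zero.1 hdecay.1) ε' hε'pos
    obtain ⟨R1, hR1⟩ := eventually_atTop.1 htop
    obtain ⟨R2, hR2⟩ := eventually_atBot.1 hbot
    refine ⟨max 1 (max R1 (-R2)), le_max_left _ _, fun ω hω => ?_⟩
    rcases le_or_gt 0 ω with hω0 | hω0
    · apply hR1
      rw [abs_of_nonneg hω0] at hω
      exact le_trans (le_trans (le_max_left _ _) (le_max_right _ _)) hω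
    · apply hR2
      rw [abs_of_neg hω0] at hω
      have : max 1 (max R1 (-R2)) ≤ -ω := hω
      have h2 : -R2 ≤ -ω := le_trans (le_trans (le_max_right _ _) (le_max_right _ _)) this
      linarith
  have hRpos : 0 < R := lt_of_lt_of_le one_pos hR1
  -- m = 0 term control
  obtain ⟨δ1, hδ1pos, hδ1⟩ := Metric.tendsto_nhdsWithin_nhds.1
    (one_div_mul_phiHatR_tendsto Ω) (ε / (2 * (‖K Ω‖ + 1)))
    (by positivity)
  refine ⟨min δ1 (min (Real.pi / (|Ω| + 1)) (Real.pi / R)), by positivity, ?_⟩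
  intro Δt hΔtmem hΔtdist
  have hΔt : (0:ℝ) < Δt := hΔtmem
  rw [Real.dist_eq, sub_zero, abs_of_pos hΔt] at hΔtdist
  have hΔδ1 : Δt < δ1 := lt_of_lt_of_le hΔtdist (min_le_left _ _)
  have hΔΩ : Δt ≤ Real.pi / (|Ω| + 1) :=
    le_of_lt (lt_of_lt_of_le hΔtdist (le_trans (min_le_right _ _) (min_le_left _ _)))
  have hΔR : Δt ≤ Real.pi / R :=
    le_of_lt (lt_of_lt_of_le hΔtdist (le_trans (min_le_right _ _) (min_le_right _ _)))
  set ω : ℤ → ℝ := fun m => Ω - 2 * m * Real.pi / Δt with hω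
  set f : ℤ → ℂ := fun m => (1 / Δt : ℝ) • (K (ω m) * (phiHatR Δt (ω m) : ℂ)) with hf
  -- norm of terms
  have hnorm : ∀ m : ℤ, ‖f m‖ = 1 / Δt * (‖K (ω m)‖ * phiHatR Δt (ω m)) := by
    intro m
    rw [hf]
    simp only [norm_smul, norm_mul, Complex.norm_real, Real.norm_eq_abs]
    rw [abs_of_pos (by positivity : (0:ℝ) < 1 / Δt),
      abs_of_nonneg (phiHatR_nonneg hΔt _)]
  -- key bound for m ≠ 0
  have hΩΔ : |Ω| * Δt ≤ Real.pi := by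
    have h1 : |Ω| * Δt ≤ |Ω| * (Real.pi / (|Ω| + 1)) :=
      mul_le_mul_of_nonneg_left hΔΩ (abs_nonneg _)
    have h2 : |Ω| * (Real.pi / (|Ω| + 1)) ≤ Real.pi := by
      rw [mul_div_assoc']
      rw [div_le_iff₀ (by positivity : (0:ℝ) < |Ω| + 1)]
      nlinarith [abs_nonneg Ω]
    linarith
  have hωbig : ∀ m : ℤ, m ≠ 0 → Real.pi * |(m:ℝ)| / Δt ≤ |ω m| := by
    intro m hm
    have hm1 : (1:ℝ) ≤ |(m:ℝ)| := by
      rw [← Int.cast_abs]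
      exact_mod_cast Int.one_le_abs hm
    rw [div_le_iff₀ hΔt, ← abs_of_pos hΔt, ← abs_mul]
    have heq : ω m * Δt = Ω * Δt - 2 * m * Real.pi := by
      rw [hω]; field_simp
    rw [heq]
    have h1 : |2 * (m:ℝ) * Real.pi| - |Ω * Δt| ≤ |Ω * Δt - 2 * m * Real.pi| := by
      have := abs_sub_abs_le_abs_sub (2 * (m:ℝ) * Real.pi) (Ω * Δt)
      rw [abs_sub_comm] at this
      linarith
    have h2 : |2 * (m:ℝ) * Real.pi| = 2 * |(m:ℝ)| * Real.pi := by
      rw [abs_mul, abs_mul]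
      rw [abs_of_pos hπ]
      norm_num
    have h3 : |Ω * Δt| ≤ Real.pi := by
      rw [abs_mul, abs_of_pos hΔt]; exact hΩΔ
    nlinarith
  have hbound : ∀ m : ℤ, m ≠ 0 → ‖f m‖ ≤ ε' * (4 / (Real.pi ^ 2 * (m:ℝ) ^ 2)) := by
    intro m hm
    have hm1 : (1:ℝ) ≤ |(m:ℝ)| := by
      rw [← Int.cast_abs]
      exact_mod_cast Int.one_le_abs hm
    have hbig := hωbig m hm
    have hπm : Real.pi ≤ Real.pi * |(m:ℝ)| := by nlinarith
    have hRω : R ≤ |ω m| := by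
      have h1 : Real.pi / Δt ≤ Real.pi * |(m:ℝ)| / Δt :=
        (div_le_div_iff_of_pos_right hΔt).2 hπm
      have h2 : R ≤ Real.pi / Δt := by
        rw [le_div_iff₀ hΔt]
        rw [le_div_iff₀ hRpos] at hΔR
        linarith
      linarith
    have hωne : ω m ≠ 0 := by
      intro h0
      rw [h0, abs_zero] at hRω
      linarith
    have hKsm : ‖K (ω m)‖ ≤ ε' := (hRsmall _ hRω).le
    have hφ : phiHatR Δt (ω m) ≤ 4 / ((ω m) ^ 2 * Δt) := phiHatR_le_four hΔt hωne
    have hsq : Real.pi ^ 2 * (m:ℝ) ^ 2 ≤ (ω m) ^ 2 * Δt ^ 2 := by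
      have h1 : (Real.pi * |(m:ℝ)| / Δt) ^ 2 ≤ |ω m| ^ 2 := by
        apply pow_le_pow_left₀ (by positivity) hbig
      rw [sq_abs] at h1
      have h2 : (Real.pi * |(m:ℝ)| / Δt) ^ 2 = Real.pi ^ 2 * (m:ℝ) ^ 2 / Δt ^ 2 := by
        rw [div_pow, mul_pow, sq_abs]
      rw [h2, div_le_iff₀ (by positivity : (0:ℝ) < Δt ^ 2)] at h1
      linarith
    rw [hnorm m]
    have hφnn := phiHatR_nonneg hΔt (ω m)
    have hKnn := norm_nonneg (K (ω m))
    have hstep : 1 / Δt * (‖K (ω m)‖ * phiHatR Δt (ω m))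
        ≤ 1 / Δt * (ε' * (4 / ((ω m) ^ 2 * Δt))) := by
      apply mul_le_mul_of_nonneg_left _ (by positivity)
      apply mul_le_mul hKsm hφ hφnn hε'pos.le
    have hωsq : (0:ℝ) < (ω m) ^ 2 := by positivity
    have hmsq : (0:ℝ) < (m:ℝ) ^ 2 := by positivity
    have hstep2 : 1 / Δt * (ε' * (4 / ((ω m) ^ 2 * Δt)))
        = ε' * (4 / ((ω m) ^ 2 * Δt ^ 2)) := by
      field_simp
    have hstep3 : ε' * (4 / ((ω m) ^ 2 * Δt ^ 2)) ≤ ε' * (4 / (Real.pi ^ 2 * (m:ℝ) ^ 2)) := by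
      apply mul_le_mul_of_nonneg_left _ hε'pos.le
      apply div_le_div_of_nonneg_left (by norm_num) (by positivity) _
      nlinarith
    linarith
  -- summability
  have hbsum : Summable (fun m : ℤ => ε' * (4 / (Real.pi ^ 2 * (m:ℝ) ^ 2))) :=
    hcsum.mul_left ε'
  have hsumf : Summable f := by
    apply Summable.of_norm_bounded_eventually hbsum
    rw [Filter.eventually_cofinite]
    apply Set.Finite.subset (Set.finite_singleton (0:ℤ))
    intro m hm
    simp only [Set.mem_setOf_eq] at hm
    by_contra hne
    exact hm (hbound m hne)
  -- split off m = 0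
  have hsplit := hsumf.tsum_eq_add_tsum_ite 0
  have hω0 : ω 0 = Ω := by simp [hω]
  have hf0 : f 0 = ((1 / Δt * phiHatR Δt Ω : ℝ) : ℂ) * K Ω := by
    rw [hf]
    simp only [hω0]
    rw [Complex.real_smul]
    push_cast
    ring
  -- bound on the m=0 deviation
  have hg := hδ1 hΔtmem (by rwa [Real.dist_eq, sub_zero, abs_of_pos hΔt])
  rw [Real.dist_eq] at hg
  have h0bound : ‖f 0 - K Ω‖ < ε / 2 := by
    rw [hf0]
    have : ((1 / Δt * phiHatR Δt Ω : ℝ) : ℂ) * K Ω - K Ω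
        = ((1 / Δt * phiHatR Δt Ω - 1 : ℝ) : ℂ) * K Ω := by push_cast; ring
    rw [this, norm_mul, Complex.norm_real, Real.norm_eq_abs]
    have hK := norm_nonneg (K Ω)
    calc |1 / Δt * phiHatR Δt Ω - 1| * ‖K Ω‖
        ≤ (ε / (2 * (‖K Ω‖ + 1))) * ‖K Ω‖ := by
          apply mul_le_mul_of_nonneg_right hg.le hK
      _ < ε / 2 := by
          rw [div_mul_eq_mul_div, div_lt_div_iff₀ (by positivity) (by norm_num)]
          nlinarith
  -- bound on the tail
  have hitesum : Summable (fun m : ℤ => ‖if m = 0 then (0:ℂ) else f m‖) := by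
    apply Summable.of_nonneg_of_le (fun m => norm_nonneg _) _ hbsum
    intro m
    by_cases hm : m = 0
    · simp [hm]
    · rw [if_neg hm]
      exact hbound m hm
  have htail : ‖∑' m : ℤ, (if m = 0 then (0:ℂ) else f m)‖ < ε / 2 := by
    calc ‖∑' m : ℤ, (if m = 0 then (0:ℂ) else f m)‖
        ≤ ∑' m : ℤ, ‖if m = 0 then (0:ℂ) else f m‖ := norm_tsum_le_tsum_norm hitesum
      _ ≤ ∑' m : ℤ, ε' * (4 / (Real.pi ^ 2 * (m:ℝ) ^ 2)) := by
          apply Summable.tsum_le_tsum _ hitesum hbsum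
          intro m
          by_cases hm : m = 0
          · simp [hm]
          · rw [if_neg hm]; exact hbound m hm
      _ = ε' * c := tsum_mul_left
      _ < ε / 2 := by
          rw [hε']
          rw [div_mul_eq_mul_div, div_lt_div_iff₀ (by positivity) (by norm_num)]
          nlinarith
  -- conclude
  rw [Complex.dist_eq]
  calc ‖(∑' m : ℤ, f m) - K Ω‖
      = ‖(f 0 - K Ω) + ∑' m : ℤ, (if m = 0 then (0:ℂ) else f m)‖ := by
        rw [hsplit, add_sub_right_comm]
    _ ≤ ‖f 0 - K Ω‖ + ‖∑' m : ℤ, (if m = 0 then (0:ℂ) else f m)‖ := norm_add_le _ _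
    _ < ε / 2 + ε / 2 := add_lt_add h0bound htail
    _ = ε := by ring
end

section
/- For every Δt > 0 and every real Ω, the hat-function Fourier transform satisfies the partition identity Σ_{m∈ℤ} (1/Δt) φ̂_Δt(Ω - 2mπ/Δt) = 1. -/
open MeasureTheory Real Complex intervalIntegral

lemma hasDerivAt_exp_mul_poly (z a b : ℂ) (v : ℝ) :
    HasDerivAt (fun v : ℝ => Complex.exp (z * v) * (a + b * v))
      (Complex.exp (z * v) * (z * (a + b * v) + b)) v := by
  have h : HasDerivAt (fun w : ℂ => Complex.exp (z * w) * (a + b * w))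
      (Complex.exp (z * v) * (z * (a + b * v) + b)) (v : ℂ) := by
    have h1 : HasDerivAt (fun w : ℂ => Complex.exp (z * w)) (Complex.exp (z * v) * z) v := by
      simpa using ((hasDerivAt_id (v : ℂ)).const_mul z).cexp
    have h2 : HasDerivAt (fun w : ℂ => a + b * w) b (v : ℂ) := by
      simpa using ((hasDerivAt_id (v : ℂ)).const_mul b).const_add a
    exact (h1.mul h2).congr_deriv (by ring)
  exact h.comp_ofReal

lemma integral_linear_exp (z c : ℂ) (hz : z ≠ 0) (s t : ℝ) :
    ∫ v in s..t, (c - (v:ℂ)) * Complex.exp (z * v)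
      = Complex.exp (z * t) * ((c - t) / z + 1 / z ^ 2)
        - Complex.exp (z * s) * ((c - s) / z + 1 / z ^ 2) := by
  have key := intervalIntegral.integral_eq_sub_of_hasDerivAt (a := s) (b := t)
    (f := fun v : ℝ => Complex.exp (z * v) * ((c / z + 1 / z ^ 2) + (-(1 / z)) * v))
    (f' := fun v : ℝ => (c - (v:ℂ)) * Complex.exp (z * v))
    (fun x _ => by
      refine (hasDerivAt_exp_mul_poly z (c / z + 1 / z ^ 2) (-(1 / z)) x).congr_deriv ?_
      have hsc : z * (c / z + 1 / z ^ 2 + -(1 / z) * x) + -(1 / z) = c - x := by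
        field_simp
        ring
      rw [hsc, mul_comm])
    (by
      apply Continuous.intervalIntegrable
      continuity)
  rw [key]
  ring

open Real in
noncomputable def sincSq (x : ℝ) : ℝ :=
  if x = 0 then 1 else (1 - Real.cos (2 * π * x)) / (2 * π ^ 2 * x ^ 2)

noncomputable def Hat : ℝ → ℂ := fun t => ((max 0 (1 - |t|) : ℝ) : ℂ)

lemma Hat_eq_zero {t : ℝ} (ht : 1 ≤ |t|) : Hat t = 0 := by
  simp only [Hat, Complex.ofReal_eq_zero]
  exact max_eq_left (by linarith)

lemma continuous_Hat : Continuous Hat :=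
  Complex.continuous_ofReal.comp (continuous_const.max (by continuity))

lemma integrable_Hat : MeasureTheory.Integrable Hat := by
  apply continuous_Hat.integrable_of_hasCompactSupport
  apply HasCompactSupport.intro (isCompact_Icc (a := (-1:ℝ)) (b := 1))
  intro t ht
  simp only [Set.mem_Icc, not_and_or, not_le] at ht
  rcases ht with h | h
  · exact Hat_eq_zero (by rw [abs_of_neg (by linarith)]; linarith)
  · exact Hat_eq_zero (by rw [abs_of_pos (by linarith)]; linarith)

open Real in
lemma fourier_Hat (ξ : ℝ) : FourierTransform.fourier Hat ξ = (sincSq ξ : ℂ) := by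
  rw [Real.fourier_real_eq_integral_exp_smul]
  have hsupp : ∀ v : ℝ, v ∉ Set.Icc (-1:ℝ) 1 →
      Complex.exp (↑(-2 * π * v * ξ) * Complex.I) • Hat v = 0 := by
    intro v hv
    simp only [Set.mem_Icc, not_and_or, not_le] at hv
    have : Hat v = 0 := by
      rcases hv with h | h
      · exact Hat_eq_zero (by rw [abs_of_neg (by linarith)]; linarith)
      · exact Hat_eq_zero (by rw [abs_of_pos (by linarith)]; linarith)
    simp [this]
  rw [← MeasureTheory.setIntegral_eq_integral_of_forall_compl_eq_zero hsupp,
    MeasureTheory.integral_Icc_eq_integral_Ioc,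
    ← intervalIntegral.integral_of_le (by norm_num : (-1:ℝ) ≤ 1)]
  have hcont : ∀ a b : ℝ, IntervalIntegrable
      (fun v : ℝ => Complex.exp (↑(-2 * π * v * ξ) * Complex.I) • Hat v) MeasureTheory.volume a b := by
    intro a b
    apply Continuous.intervalIntegrable
    exact (Complex.continuous_exp.comp (by continuity)).smul continuous_Hat
  rw [← intervalIntegral.integral_add_adjacent_intervals (b := 0) (hcont _ _) (hcont _ _)]
  set z : ℂ := -(2 * π * ξ) * Complex.I with hz_def
  have hneg : ∫ v in (-1:ℝ)..0, Complex.exp (↑(-2 * π * v * ξ) * Complex.I) • Hat v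
      = ∫ v in (-1:ℝ)..0, -(((-1:ℂ) - v) * Complex.exp (z * v)) := by
    apply intervalIntegral.integral_congr
    intro v hv
    rw [Set.uIcc_of_le (by norm_num : (-1:ℝ) ≤ 0)] at hv
    obtain ⟨h1, h2⟩ := hv
    have hHat : Hat v = 1 + (v : ℂ) := by
      simp only [Hat, abs_of_nonpos h2, max_eq_right (by linarith : (0:ℝ) ≤ 1 - -v)]
      push_cast; ring
    simp only [smul_eq_mul]
    rw [hHat]
    have harg : (↑(-2 * π * v * ξ) * Complex.I) = z * v := by
      rw [hz_def]; push_cast; ring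
    rw [harg]; ring
  have hpos : ∫ v in (0:ℝ)..1, Complex.exp (↑(-2 * π * v * ξ) * Complex.I) • Hat v
      = ∫ v in (0:ℝ)..1, ((1:ℂ) - v) * Complex.exp (z * v) := by
    apply intervalIntegral.integral_congr
    intro v hv
    rw [Set.uIcc_of_le (by norm_num : (0:ℝ) ≤ 1)] at hv
    obtain ⟨h1, h2⟩ := hv
    have hHat : Hat v = 1 - (v : ℂ) := by
      simp only [Hat, _root_.abs_of_nonneg h1, max_eq_right (by linarith : (0:ℝ) ≤ 1 - v)]
      push_cast; ring
    simp only [smul_eq_mul]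
    rw [hHat]
    have harg : (↑(-2 * π * v * ξ) * Complex.I) = z * v := by
      rw [hz_def]; push_cast; ring
    rw [harg]; ring
  rw [hneg, hpos]
  rcases eq_or_ne ξ 0 with hξ | hξ
  · subst hξ
    simp only [sincSq, if_pos rfl, hz_def]
    norm_num
    have e1 : ∫ v in (-1:ℝ)..0, ((v:ℂ) + 1) = 1/2 := by
      have : (fun v : ℝ => ((v:ℂ) + 1)) = fun v : ℝ => ((v + 1 : ℝ) : ℂ) := by
        funext v; push_cast; ring
      rw [this, intervalIntegral.integral_ofReal,
        intervalIntegral.integral_add intervalIntegrable_id intervalIntegrable_const,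
        integral_id, intervalIntegral.integral_const]
      norm_num
    have e2 : ∫ v in (0:ℝ)..1, (1 - (v:ℂ)) = 1/2 := by
      have : (fun v : ℝ => (1 - (v:ℂ))) = fun v : ℝ => ((1 - v : ℝ) : ℂ) := by
        funext v; push_cast; ring
      rw [this, intervalIntegral.integral_ofReal,
        intervalIntegral.integral_sub intervalIntegrable_const intervalIntegrable_id,
        integral_id, intervalIntegral.integral_const]
      norm_num
    rw [e1, e2]
    norm_num
  · have hzne : z ≠ 0 := by
      simp [hz_def, Complex.I_ne_zero, pi_ne_zero, hξ]
    rw [intervalIntegral.integral_neg, integral_linear_exp z (-1) hzne,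
      integral_linear_exp z 1 hzne]
    have hz2 : z ^ 2 = ((-(4 * π ^ 2 * ξ ^ 2) : ℝ) : ℂ) := by
      rw [hz_def]; push_cast
      rw [mul_pow, Complex.I_sq]; ring
    have hcos : Complex.exp (z * 1) + Complex.exp (z * (-1))
        = ((2 * Real.cos (2 * π * ξ) : ℝ) : ℂ) := by
      rw [hz_def]
      rw [show -(2 * (π:ℂ) * ξ) * Complex.I * 1 = ((-(2 * π * ξ) : ℝ):ℂ) * Complex.I by push_cast; ring,
        show -(2 * (π:ℂ) * ξ) * Complex.I * (-1) = ((2 * π * ξ : ℝ):ℂ) * Complex.I by push_cast; ring,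
        Complex.exp_mul_I, Complex.exp_mul_I]
      push_cast
      rw [Complex.cos_neg, Complex.sin_neg]
      ring
    have expand : -(Complex.exp (z * ((0:ℝ):ℂ)) * (((-1:ℂ) - ((0:ℝ):ℂ)) / z + 1 / z ^ 2)
          - Complex.exp (z * ((-1:ℝ):ℂ)) * (((-1:ℂ) - ((-1:ℝ):ℂ)) / z + 1 / z ^ 2))
        + (Complex.exp (z * ((1:ℝ):ℂ)) * (((1:ℂ) - ((1:ℝ):ℂ)) / z + 1 / z ^ 2)
          - Complex.exp (z * ((0:ℝ):ℂ)) * (((1:ℂ) - ((0:ℝ):ℂ)) / z + 1 / z ^ 2))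
        = (Complex.exp (z * 1) + Complex.exp (z * (-1)) - 2) / z ^ 2 := by
      push_cast
      simp only [mul_zero, Complex.exp_zero, div_eq_mul_inv, inv_pow]
      ring
    push_cast at expand ⊢
    rw [expand, hcos, hz2]
    rw [sincSq, if_neg hξ]
    have hne1 : (4 * π ^ 2 * ξ ^ 2 : ℝ) ≠ 0 :=
      mul_ne_zero (mul_ne_zero four_ne_zero (pow_ne_zero _ pi_ne_zero)) (pow_ne_zero _ hξ)
    have hne2 : (2 * π ^ 2 * ξ ^ 2 : ℝ) ≠ 0 :=
      mul_ne_zero (mul_ne_zero two_ne_zero (pow_ne_zero _ pi_ne_zero)) (pow_ne_zero _ hξ)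
    rw [show ((2 * Real.cos (2 * π * ξ) : ℝ) : ℂ) - 2
        = (((2 * Real.cos (2 * π * ξ) - 2 : ℝ)) : ℂ) by push_cast; ring,
      ← Complex.ofReal_div, Complex.ofReal_inj,
      div_eq_div_iff (neg_ne_zero.mpr hne1) hne2]
    ring

open Real FourierTransform MeasureTheory in
lemma continuous_fourier_Hat : Continuous (FourierTransform.fourier Hat) :=
  VectorFourier.fourierIntegral_continuous (L := innerₗ ℝ) Real.continuous_fourierChar
    (by exact continuous_inner) integrable_Hat

open Real in
lemma sincSq_nonneg (x : ℝ) : 0 ≤ sincSq x := by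
  rw [sincSq]
  split_ifs with h
  · norm_num
  · apply div_nonneg
    · have := Real.cos_le_one (2 * π * x); linarith
    · positivity

open Real in
lemma sincSq_le_one (x : ℝ) : sincSq x ≤ 1 := by
  rw [sincSq]
  split_ifs with h
  · norm_num
  · rw [div_le_one (by positivity)]
    have := Real.one_sub_sq_div_two_le_cos (x := 2 * π * x)
    nlinarith [sq_nonneg (π * x)]

open Real in
lemma sincSq_le_inv {x : ℝ} (hx : x ≠ 0) : sincSq x ≤ 1 / (π ^ 2 * x ^ 2) := by
  rw [sincSq, if_neg hx]
  rw [div_le_div_iff₀ (by positivity) (by positivity)]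
  have h1 : -1 ≤ Real.cos (2 * π * x) := Real.neg_one_le_cos _
  nlinarith [sq_nonneg (π * x)]

open Real MeasureTheory in
lemma integrable_fourier_Hat : Integrable (FourierTransform.fourier Hat) := by
  apply Integrable.mono' (g := fun ξ : ℝ => 2 * (1 + ξ ^ 2)⁻¹)
    (integrable_inv_one_add_sq.const_mul 2)
    continuous_fourier_Hat.aestronglyMeasurable
  filter_upwards with ξ
  rw [fourier_Hat, Complex.norm_real, Real.norm_eq_abs,
    _root_.abs_of_nonneg (sincSq_nonneg ξ)]
  rw [← div_eq_mul_inv, le_div_iff₀ (by positivity)]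
  have hs := sincSq_nonneg ξ
  rcases le_or_gt (ξ ^ 2) 1 with h | h
  · nlinarith [sincSq_le_one ξ]
  · have hξ : ξ ≠ 0 := by intro h0; rw [h0] at h; norm_num at h
    have h1 := sincSq_le_inv hξ
    rw [le_div_iff₀ (by positivity)] at h1
    have hπ : (3:ℝ) < π := Real.pi_gt_three
    have h9 : (9:ℝ) ≤ π ^ 2 := by nlinarith
    nlinarith [mul_le_mul_of_nonneg_left h9 (mul_nonneg hs (sq_nonneg ξ)),
      mul_nonneg hs (by linarith : (0:ℝ) ≤ ξ ^ 2 - 1)]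

open Real MeasureTheory FourierTransform in
lemma fourier_fourier_Hat (x : ℝ) :
    FourierTransform.fourier (FourierTransform.fourier Hat) x = Hat (-x) := by
  have h := MeasureTheory.Integrable.fourierInv_fourier_eq (f := Hat) (v := -x)
    integrable_Hat integrable_fourier_Hat continuous_Hat.continuousAt
  rw [← h, fourierInv_eq_fourier_neg, neg_neg]

open Real MeasureTheory Asymptotics Filter in
lemma fourier_Hat_isBigO :
    (FourierTransform.fourier Hat) =O[cocompact ℝ] (fun x : ℝ => |x| ^ (-2 : ℝ)) := by
  rw [isBigO_iff]
  refine ⟨1, ?_⟩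
  have hb : ∀ x : ℝ, 1 ≤ |x| → ‖FourierTransform.fourier Hat x‖ ≤ 1 * ‖|x| ^ (-2 : ℝ)‖ := by
    intro x hx
    have hx0 : x ≠ 0 := by intro h; rw [h] at hx; norm_num at hx
    rw [fourier_Hat, Complex.norm_real, Real.norm_eq_abs,
      _root_.abs_of_nonneg (sincSq_nonneg x), one_mul, Real.norm_eq_abs,
      _root_.abs_of_nonneg (Real.rpow_nonneg (abs_nonneg x) _)]
    have h2 : |x| ^ (-2 : ℝ) = 1 / x ^ 2 := by
      rw [Real.rpow_neg (abs_nonneg x), one_div]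
      congr 1
      rw [show (2:ℝ) = ((2:ℕ):ℝ) by norm_num, Real.rpow_natCast, _root_.sq_abs]
    rw [h2]
    refine (sincSq_le_inv hx0).trans ?_
    have hπ : (1:ℝ) ≤ π ^ 2 := by nlinarith [Real.pi_gt_three]
    rw [div_le_div_iff₀ (by positivity) (by positivity)]
    nlinarith [sq_nonneg x]
  rw [cocompact_eq_atBot_atTop, eventually_sup]
  constructor
  · filter_upwards [eventually_le_atBot (-1 : ℝ)] with x hx
    exact hb x (by rw [_root_.abs_of_nonpos (by linarith)]; linarith)
  · filter_upwards [eventually_ge_atTop (1 : ℝ)] with x hx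
    exact hb x (by rw [_root_.abs_of_nonneg (by linarith)]; linarith)

open Real MeasureTheory Asymptotics Filter in
lemma fourier_fourier_Hat_isBigO :
    (FourierTransform.fourier (FourierTransform.fourier Hat)) =O[cocompact ℝ]
      (fun x : ℝ => |x| ^ (-2 : ℝ)) := by
  rw [isBigO_iff]
  refine ⟨1, ?_⟩
  have hb : ∀ x : ℝ, 1 ≤ |x| → ‖FourierTransform.fourier (FourierTransform.fourier Hat) x‖
      ≤ 1 * ‖|x| ^ (-2 : ℝ)‖ := by
    intro x hx
    rw [fourier_fourier_Hat, Hat_eq_zero (by rwa [abs_neg]), norm_zero]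
    positivity
  rw [cocompact_eq_atBot_atTop, eventually_sup]
  constructor
  · filter_upwards [eventually_le_atBot (-1 : ℝ)] with x hx
    exact hb x (by rw [_root_.abs_of_nonpos (by linarith)]; linarith)
  · filter_upwards [eventually_ge_atTop (1 : ℝ)] with x hx
    exact hb x (by rw [_root_.abs_of_nonneg (by linarith)]; linarith)

open Real MeasureTheory in
lemma poisson_sincSq (x : ℝ) : ∑' n : ℤ, ((sincSq (x + n) : ℝ) : ℂ) = 1 := by
  have P := Real.tsum_eq_tsum_fourier_of_rpow_decay (f := FourierTransform.fourier Hat)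
    continuous_fourier_Hat (by norm_num : (1:ℝ) < 2) fourier_Hat_isBigO
    fourier_fourier_Hat_isBigO x
  have hL : ∑' n : ℤ, FourierTransform.fourier Hat (x + n) = ∑' n : ℤ, ((sincSq (x + n) : ℝ) : ℂ) :=
    tsum_congr fun n => fourier_Hat _
  rw [hL] at P
  rw [P]
  rw [tsum_eq_single (0 : ℤ) ?h]
  · rw [fourier_fourier_Hat]
    norm_num [Hat]
  · intro n hn
    rw [fourier_fourier_Hat]
    have : Hat (-(n:ℝ)) = 0 := by
      apply Hat_eq_zero
      rw [abs_neg, ← Int.cast_abs]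
      exact_mod_cast Int.one_le_abs hn
    rw [this, zero_mul]

open Real in
lemma tsum_sincSq (x : ℝ) : ∑' n : ℤ, sincSq (x + n) = 1 := by
  have := poisson_sincSq x
  rw [← Complex.ofReal_tsum] at this
  exact_mod_cast this

open Real in
/-- Partition of unity: `Σ_{m∈ℤ} (1/Δt) φ̂_Δt(Ω - 2mπ/Δt) = 1` for every `Δt > 0` and real
`Ω`. -/
theorem phiHat_partition_of_unity (Δt : ℝ) (hΔt : 0 < Δt) (Ω : ℝ) :
    ∑' m : ℤ, (1 / Δt) * phiHatR Δt (Ω - 2 * m * Real.pi / Δt) = 1 := by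
  set x : ℝ := Ω * Δt / (2 * π) with hx_def
  have hterm : ∀ m : ℤ, (1 / Δt) * phiHatR Δt (Ω - 2 * m * Real.pi / Δt)
      = sincSq (x - m) := by
    intro m
    by_cases h : Ω - 2 * (m:ℝ) * π / Δt = 0
    · have hΩ : Ω * Δt = 2 * π * m := by
        field_simp at h
        linarith
      have hx : x - (m:ℝ) = 0 := by
        rw [hx_def, hΩ]
        field_simp
        ring
      rw [phiHatR, if_pos h, hx, sincSq, if_pos rfl]
      field_simp
    · have hx : x - (m:ℝ) ≠ 0 := by
        intro h0
        apply h
        have hΩ : Ω * Δt = 2 * π * m := by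
          rw [hx_def, sub_eq_zero] at h0
          field_simp at h0
          linarith
        field_simp
        linarith
      have harg : (Ω - 2 * (m:ℝ) * π / Δt) * Δt = 2 * π * (x - m) := by
        rw [hx_def]
        field_simp
      rw [phiHatR, if_neg h, sincSq, if_neg hx, harg]
      have hΩ' : Ω - 2 * (m:ℝ) * π / Δt = 2 * π * (x - m) / Δt := by
        rw [eq_div_iff hΔt.ne']
        exact harg
      rw [hΩ']
      rw [eq_div_iff (by positivity : (2:ℝ) * π ^ 2 * (x - m) ^ 2 ≠ 0)]
      field_simp
  rw [tsum_congr hterm]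
  have hre : ∀ m : ℤ, sincSq (x - m) = (fun k : ℤ => sincSq (x + k)) (Equiv.neg ℤ m) := by
    intro m
    simp only [Equiv.neg_apply]
    congr 1
    push_cast
    ring
  rw [tsum_congr hre, (Equiv.neg ℤ).tsum_eq (fun k : ℤ => sincSq (x + k))]
  exact tsum_sincSq x
end
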